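/- arXiv:1609.03919 — 3 statements merged into one kernel-verified Lean document; each statement's English description precedes it below -/
import Mathlib

section
/- If p^m exactly divides S with 0 \le m < n and S_1 = S/p^m, then G(a,b,c;S;p^n) = p^{2m} \cdot G(a,b,c;S_1;p^{n-m}). -/
open Finset

noncomputable def Gsum (S : ℤ) (k : ℕ) : ℂ :=
  ∑ x ∈ Finset.range k,
    Complex.exp (2 * Real.pi * Complex.I * ((S * (x : ℤ) ^ 2 : ℤ) : ℂ) / (k : ℂ))

noncomputable def Gsum2 (a b c S : ℤ) (k : ℕ) : ℂ :=
  ∑ x ∈ Finset.range k, ∑ y ∈ Finset.range k,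
    Complex.exp (2 * Real.pi * Complex.I *
      ((S * (a * (x : ℤ) ^ 2 + b * (x : ℤ) * (y : ℤ) + c * (y : ℤ) ^ 2) : ℤ) : ℂ) / (k : ℂ))

lemma exp_congr_aux (T : ℕ) (hT : T ≠ 0) (A B : ℤ) (h : (T : ℤ) ∣ (A - B)) :
    Complex.exp (2 * Real.pi * Complex.I * (A : ℂ) / (T : ℂ)) =
      Complex.exp (2 * Real.pi * Complex.I * (B : ℂ) / (T : ℂ)) := by
  obtain ⟨k, hk⟩ := h
  have hA : A = B + T * k := by linarith
  have hTc : (T : ℂ) ≠ 0 := Nat.cast_ne_zero.mpr hT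
  have : (A : ℂ) = (B : ℂ) + (T : ℂ) * (k : ℂ) := by rw [hA]; push_cast; ring
  rw [this, show 2 * Real.pi * Complex.I * ((B : ℂ) + (T : ℂ) * (k : ℂ)) / (T : ℂ) =
      2 * Real.pi * Complex.I * (B : ℂ) / (T : ℂ) + (k : ℂ) * (2 * Real.pi * Complex.I) by
      field_simp]
  rw [Complex.exp_add, Complex.exp_int_mul_two_pi_mul_I, mul_one]

lemma sum_range_mul_periodic (h : ℕ → ℂ) (T M : ℕ) (hper : ∀ x, h (x + T) = h x) :
    ∑ x ∈ Finset.range (M * T), h x = (M : ℂ) * ∑ x ∈ Finset.range T, h x := by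
  have hk : ∀ k x, h (x + k * T) = h x := by
    intro k
    induction k with
    | zero => simp
    | succ k ih =>
      intro x
      rw [Nat.succ_mul, ← Nat.add_assoc, hper, ih]
  induction M with
  | zero => simp
  | succ M ih =>
    have hc : ∑ i ∈ Finset.range T, h (M * T + i) = ∑ i ∈ Finset.range T, h i :=
      Finset.sum_congr rfl fun i _ => by rw [Nat.add_comm]; exact hk M i
    rw [Nat.succ_mul, Finset.sum_range_add, ih, hc]
    push_cast
    ring

theorem stmt_1 (p : ℕ) (hp : p.Prime) (n m : ℕ) (hn : 0 < n) (hm : m < n)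
    (a b c S : ℤ) (hdvd : (p : ℤ) ^ m ∣ S) (hndvd : ¬ (p : ℤ) ^ (m + 1) ∣ S) :
    Gsum2 a b c S (p ^ n) = (p : ℂ) ^ (2 * m) * Gsum2 a b c (S / (p : ℤ) ^ m) (p ^ (n - m)) := by
  set T : ℕ := p ^ (n - m) with hTdef
  set M : ℕ := p ^ m with hMdef
  set S1 : ℤ := S / (p : ℤ) ^ m with hS1def
  have hp0 : p ≠ 0 := hp.ne_zero
  have hT0 : T ≠ 0 := pow_ne_zero _ hp0
  have hM0 : (M : ℂ) ≠ 0 := Nat.cast_ne_zero.mpr (pow_ne_zero _ hp0)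
  have hpn : p ^ n = M * T := by
    rw [hMdef, hTdef, ← pow_add, Nat.add_sub_cancel' hm.le]
  have hS : S = (M : ℤ) * S1 := by
    rw [hS1def, hMdef]; push_cast
    exact (Int.mul_ediv_cancel' hdvd).symm
  set F : ℕ → ℕ → ℂ := fun x y => Complex.exp (2 * Real.pi * Complex.I *
      ((S1 * (a * (x : ℤ) ^ 2 + b * (x : ℤ) * (y : ℤ) + c * (y : ℤ) ^ 2) : ℤ) : ℂ) / (T : ℂ))
    with hFdef
  have key : Gsum2 a b c S (p ^ n) = ∑ x ∈ Finset.range (M * T), ∑ y ∈ Finset.range (M * T), F x y := by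
    rw [Gsum2, hpn]
    refine Finset.sum_congr rfl fun x _ => Finset.sum_congr rfl fun y _ => ?_
    rw [hFdef]
    congr 1
    have h1 : ((M * T : ℕ) : ℂ) = (M : ℂ) * (T : ℂ) := by push_cast; ring
    have hTc : (T : ℂ) ≠ 0 := Nat.cast_ne_zero.mpr hT0
    rw [hS, h1]
    push_cast
    field_simp
  have hperY : ∀ x y, F x (y + T) = F x y := by
    intro x y
    apply exp_congr_aux T hT0
    refine ⟨S1 * (b * (x : ℤ) + c * (2 * (y : ℤ) + (T : ℤ))), ?_⟩
    push_cast
    ring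
  have hperX : ∀ y x, F (x + T) y = F x y := by
    intro y x
    apply exp_congr_aux T hT0
    refine ⟨S1 * (a * (2 * (x : ℤ) + (T : ℤ)) + b * (y : ℤ)), ?_⟩
    push_cast
    ring
  rw [key]
  have hinner : ∀ x, ∑ y ∈ Finset.range (M * T), F x y = (M : ℂ) * ∑ y ∈ Finset.range T, F x y :=
    fun x => sum_range_mul_periodic (F x) T M (hperY x)
  calc ∑ x ∈ Finset.range (M * T), ∑ y ∈ Finset.range (M * T), F x y
      = ∑ x ∈ Finset.range (M * T), (M : ℂ) * ∑ y ∈ Finset.range T, F x y :=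
        Finset.sum_congr rfl fun x _ => hinner x
    _ = (M : ℂ) * ∑ x ∈ Finset.range (M * T), ∑ y ∈ Finset.range T, F x y := by
        rw [Finset.mul_sum]
    _ = (M : ℂ) * ((M : ℂ) * ∑ x ∈ Finset.range T, ∑ y ∈ Finset.range T, F x y) := by
        rw [sum_range_mul_periodic (fun x => ∑ y ∈ Finset.range T, F x y) T M
          (fun x => Finset.sum_congr rfl fun y _ => hperX y x)]
    _ = (p : ℂ) ^ (2 * m) * Gsum2 a b c S1 T := by
        rw [Gsum2]
        have : (M : ℂ) = (p : ℂ) ^ m := by rw [hMdef]; push_cast; ring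
        rw [this, ← mul_assoc, ← pow_add, two_mul]
end

section
/- For n > 1 and odd S, the Gauss sum satisfies G(S;2^n) = (1+i^S)(2/S)^n \sqrt{2^n}, where (2/S) is the Jacobi symbol; moreover G(S;2) = 0. -/
open Finset Complex

noncomputable def E (N : ℕ) (t : ℤ) : ℂ :=
  Complex.exp (2 * Real.pi * Complex.I * (t : ℂ) / (N : ℂ))

lemma E_add (N : ℕ) (s t : ℤ) : E N (s + t) = E N s * E N t := by
  rw [E, E, E, ← Complex.exp_add]; congr 1; push_cast; ring

lemma E_zero (N : ℕ) : E N 0 = 1 := by simp [E]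

lemma E_self_mul (N : ℕ) (hN : N ≠ 0) (m : ℤ) : E N ((N : ℤ) * m) = 1 := by
  rw [E, show 2 * (Real.pi : ℂ) * Complex.I * (((N : ℤ) * m : ℤ) : ℂ) / (N : ℂ)
      = (m : ℂ) * (2 * Real.pi * Complex.I) by
    have : (N : ℂ) ≠ 0 := Nat.cast_ne_zero.mpr hN
    field_simp; push_cast; ring]
  exact Complex.exp_int_mul_two_pi_mul_I m

lemma E_period (N : ℕ) (hN : N ≠ 0) (t m : ℤ) : E N (t + (N : ℤ) * m) = E N t := by
  rw [E_add, E_self_mul N hN, mul_one]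

lemma my_sum_range_add (f : ℕ → ℂ) (m n : ℕ) :
    ∑ i ∈ range (m + n), f i = ∑ i ∈ range m, f i + ∑ i ∈ range n, f (m + i) := by
  induction n with
  | zero => simp
  | succ n ih => rw [← add_assoc, sum_range_succ, ih, sum_range_succ]; ring

lemma my_sum_range_double (f : ℕ → ℂ) (k : ℕ) :
    ∑ i ∈ range (2 * k), f i = ∑ i ∈ range k, (f (2 * i) + f (2 * i + 1)) := by
  induction k with
  | zero => simp
  | succ k ih =>
      rw [mul_add, mul_one, sum_range_succ, my_sum_range_add, ih, sum_range_succ,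
        sum_range_succ, sum_range_zero]
      simp only [add_zero, zero_add]
      ring

lemma E_half (M : ℕ) (hM : M ≠ 0) (m : ℤ) (hm : Odd m) : E (2 * M) ((M : ℤ) * m) = -1 := by
  have hMc : (M : ℂ) ≠ 0 := Nat.cast_ne_zero.mpr hM
  rw [E, show 2 * (Real.pi : ℂ) * Complex.I * (((M : ℤ) * m : ℤ) : ℂ) / ((2 * M : ℕ) : ℂ)
      = (m : ℂ) * (Real.pi * Complex.I) by push_cast; field_simp,
    Complex.exp_int_mul, Complex.exp_pi_mul_I]
  exact hm.neg_one_zpow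

lemma Gsum_eq (S : ℤ) (k : ℕ) : Gsum S k = ∑ x ∈ range k, E k (S * (x : ℤ) ^ 2) := rfl

lemma cancel4 (g : ℕ → ℂ) (h : ℕ) (hg : ∀ y, g (y + h) = - g y) :
    ∑ y ∈ range ((h + h) + (h + h)), g y = 0 := by
  have cancel : ∀ c : ℕ, ∑ y ∈ range (h + h), g (c + y) = 0 := by
    intro c
    rw [my_sum_range_add]
    have h1 : ∀ i ∈ range h, g (c + (h + i)) = - g (c + i) := by
      intro i _
      rw [show c + (h + i) = (c + i) + h by omega]
      exact hg _
    rw [Finset.sum_congr rfl h1, Finset.sum_neg_distrib]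
    ring
  rw [my_sum_range_add]
  have h0 := cancel 0
  simp only [zero_add] at h0
  rw [h0, cancel (h + h), add_zero]

lemma gsum_step (S : ℤ) (hS : Odd S) (m : ℕ) :
    Gsum S (2 ^ (m + 4)) = 2 * Gsum S (2 ^ (m + 2)) := by
  rw [Gsum_eq, show (2:ℕ)^(m+4) = 2 * 2^(m+3) by ring]
  simp only [my_sum_range_double]
  rw [Finset.sum_add_distrib]
  have heven : ∀ y ∈ range (2^(m+3)),
      E (2*2^(m+3)) (S * ((2*y : ℕ) : ℤ)^2) = E (2^(m+2)) (S * (y : ℤ)^2) := by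
    intro y _
    unfold E
    congr 1
    push_cast
    have c2 : ((2:ℂ))^(m+2) ≠ 0 := pow_ne_zero _ two_ne_zero
    have c3 : ((2:ℂ))^(m+3) ≠ 0 := pow_ne_zero _ two_ne_zero
    field_simp
    ring
  have heven_sum : ∑ y ∈ range (2^(m+3)), E (2^(m+2)) (S * (y:ℤ)^2)
      = 2 * Gsum S (2^(m+2)) := by
    rw [show (2:ℕ)^(m+3) = 2^(m+2) + 2^(m+2) by ring, my_sum_range_add]
    have hper : ∀ i ∈ range (2^(m+2)),
        E (2^(m+2)) (S * ((2^(m+2) + i : ℕ):ℤ)^2) = E (2^(m+2)) (S * (i:ℤ)^2) := by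
      intro i _
      rw [show S * ((2^(m+2) + i : ℕ):ℤ)^2
          = S * (i:ℤ)^2 + ((2^(m+2):ℕ):ℤ) * (S * (((2^(m+2):ℕ):ℤ) + 2*i)) by push_cast; ring]
      exact E_period _ (pow_ne_zero _ two_ne_zero) _ _
    rw [Finset.sum_congr rfl hper, Gsum_eq]
    ring
  have hfanti : ∀ y : ℕ, E (2*2^(m+3)) (S * ((2*(y + 2^(m+1))+1 : ℕ):ℤ)^2)
      = - E (2*2^(m+3)) (S * ((2*y+1 : ℕ):ℤ)^2) := by
    intro y
    rw [show S * ((2*(y + 2^(m+1))+1 : ℕ):ℤ)^2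
        = (S * ((2*y+1 : ℕ):ℤ)^2 + ((2^(m+3):ℕ):ℤ) * (S * (2*(y:ℤ)+1)))
          + ((2*2^(m+3):ℕ):ℤ) * (S * 2^m) by push_cast; ring]
    rw [E_add, E_add, E_self_mul _ (by positivity : (0:ℕ) < 2*2^(m+3)).ne',
      E_half (2^(m+3)) (pow_ne_zero _ two_ne_zero) _ (hS.mul (odd_two_mul_add_one (y:ℤ)))]
    ring
  have hodd_sum : ∑ y ∈ range (2^(m+3)), E (2*2^(m+3)) (S * ((2*y+1 : ℕ):ℤ)^2) = 0 := by
    have hc := cancel4 (fun y => E (2*2^(m+3)) (S * ((2*y+1 : ℕ):ℤ)^2)) (2^(m+1)) hfanti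
    rw [show (2^(m+1)+2^(m+1))+(2^(m+1)+2^(m+1)) = (2:ℕ)^(m+3) by ring] at hc
    exact hc
  rw [Finset.sum_congr rfl heven, heven_sum, hodd_sum, add_zero]

lemma gsum_two' (S : ℤ) (hS : Odd S) : Gsum S 2 = 0 := by
  rw [Gsum_eq, Finset.sum_range_succ, Finset.sum_range_succ, Finset.sum_range_zero]
  have h1 : E 2 (S * ((1:ℕ):ℤ)^2) = -1 := by
    have := E_half 1 one_ne_zero S hS
    norm_num at this ⊢
    exact this
  have h0 : E 2 (S * ((0:ℕ):ℤ)^2) = 1 := by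
    rw [show S * ((0:ℕ):ℤ)^2 = 0 by push_cast; ring, E_zero]
  rw [h0, h1]; ring

lemma E_four (S : ℤ) : E 4 S = Complex.I ^ S := by
  rw [E, show 2 * (Real.pi:ℂ) * Complex.I * (S:ℂ) / ((4:ℕ):ℂ)
      = (S:ℂ) * (((Real.pi/2 : ℝ):ℂ) * Complex.I) by push_cast; ring,
    Complex.exp_int_mul]
  congr 1
  rw [Complex.exp_mul_I, ← Complex.ofReal_cos, ← Complex.ofReal_sin,
    Real.cos_pi_div_two, Real.sin_pi_div_two]
  norm_num

lemma gsum_four (S : ℤ) (hS : Odd S) : Gsum S 4 = 2 * (1 + Complex.I ^ S) := by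
  rw [Gsum_eq, Finset.sum_range_succ, Finset.sum_range_succ, Finset.sum_range_succ,
    Finset.sum_range_succ, Finset.sum_range_zero]
  have e0 : E 4 (S * ((0:ℕ):ℤ)^2) = 1 := by
    rw [show S * ((0:ℕ):ℤ)^2 = 0 by push_cast; ring, E_zero]
  have e1 : E 4 (S * ((1:ℕ):ℤ)^2) = Complex.I ^ S := by
    rw [show S * ((1:ℕ):ℤ)^2 = S by push_cast; ring, E_four]
  have e2 : E 4 (S * ((2:ℕ):ℤ)^2) = 1 := by
    rw [show S * ((2:ℕ):ℤ)^2 = ((4:ℕ):ℤ) * S by push_cast; ring, E_self_mul 4 (by norm_num)]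
  have e3 : E 4 (S * ((3:ℕ):ℤ)^2) = Complex.I ^ S := by
    rw [show S * ((3:ℕ):ℤ)^2 = S + ((4:ℕ):ℤ) * (2*S) by push_cast; ring,
      E_period 4 (by norm_num), E_four]
  rw [e0, e1, e2, e3]; ring

noncomputable def om : ℂ := Complex.exp (((Real.pi/4 : ℝ):ℂ) * Complex.I)

lemma E_eight (S : ℤ) : E 8 S = om ^ S := by
  rw [E, show 2 * (Real.pi:ℂ) * Complex.I * (S:ℂ) / ((8:ℕ):ℂ)
      = (S:ℂ) * (((Real.pi/4 : ℝ):ℂ) * Complex.I) by push_cast; ring,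
    Complex.exp_int_mul, om]

lemma om_val : om = ((Real.sqrt 2 / 2 : ℝ):ℂ) * (1 + Complex.I) := by
  rw [om, Complex.exp_mul_I, ← Complex.ofReal_cos, ← Complex.ofReal_sin,
    Real.cos_pi_div_four, Real.sin_pi_div_four]
  push_cast
  ring

lemma gsum_eight_aux (S : ℤ) (hS : Odd S) : Gsum S 8 = 4 * om ^ S := by
  rw [Gsum_eq]
  rw [Finset.sum_range_succ, Finset.sum_range_succ, Finset.sum_range_succ,
    Finset.sum_range_succ, Finset.sum_range_succ, Finset.sum_range_succ,
    Finset.sum_range_succ, Finset.sum_range_succ, Finset.sum_range_zero]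
  have em1 : E 8 (((4:ℕ):ℤ) * S) = -1 := by
    have := E_half 4 (by norm_num) S hS
    norm_num at this ⊢
    exact this
  have e0 : E 8 (S * ((0:ℕ):ℤ)^2) = 1 := by
    rw [show S * ((0:ℕ):ℤ)^2 = 0 by push_cast; ring, E_zero]
  have e1 : E 8 (S * ((1:ℕ):ℤ)^2) = om ^ S := by
    rw [show S * ((1:ℕ):ℤ)^2 = S by push_cast; ring, E_eight]
  have e2 : E 8 (S * ((2:ℕ):ℤ)^2) = -1 := by
    rw [show S * ((2:ℕ):ℤ)^2 = ((4:ℕ):ℤ) * S by push_cast; ring, em1]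
  have e3 : E 8 (S * ((3:ℕ):ℤ)^2) = om ^ S := by
    rw [show S * ((3:ℕ):ℤ)^2 = S + ((8:ℕ):ℤ) * S by push_cast; ring,
      E_period 8 (by norm_num), E_eight]
  have e4 : E 8 (S * ((4:ℕ):ℤ)^2) = 1 := by
    rw [show S * ((4:ℕ):ℤ)^2 = ((8:ℕ):ℤ) * (2*S) by push_cast; ring,
      E_self_mul 8 (by norm_num)]
  have e5 : E 8 (S * ((5:ℕ):ℤ)^2) = om ^ S := by
    rw [show S * ((5:ℕ):ℤ)^2 = S + ((8:ℕ):ℤ) * (3*S) by push_cast; ring,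
      E_period 8 (by norm_num), E_eight]
  have e6 : E 8 (S * ((6:ℕ):ℤ)^2) = -1 := by
    rw [show S * ((6:ℕ):ℤ)^2 = ((4:ℕ):ℤ) * S + ((8:ℕ):ℤ) * (4*S) by push_cast; ring,
      E_period 8 (by norm_num), em1]
  have e7 : E 8 (S * ((7:ℕ):ℤ)^2) = om ^ S := by
    rw [show S * ((7:ℕ):ℤ)^2 = S + ((8:ℕ):ℤ) * (6*S) by push_cast; ring,
      E_period 8 (by norm_num), E_eight]
  rw [e0, e1, e2, e3, e4, e5, e6, e7]; ring

lemma jacobi_two_val (S : ℤ) (hS : Odd S) :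
    (jacobiSym 2 S.natAbs : ℤ) = if S % 8 = 1 ∨ S % 8 = 7 then 1 else -1 := by
  have hodd : Odd S.natAbs := Int.natAbs_odd.mpr hS
  obtain ⟨k, hk⟩ := hS
  rw [jacobiSym.at_two hodd, ZMod.χ₈_nat_eq_if_mod_eight,
    if_neg (show ¬ S.natAbs % 2 = 0 by omega)]
  have key : (S.natAbs % 8 = 1 ∨ S.natAbs % 8 = 7) ↔ (S % 8 = 1 ∨ S % 8 = 7) := by omega
  by_cases h : S % 8 = 1 ∨ S % 8 = 7
  · rw [if_pos h, if_pos (key.mpr h)]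
  · rw [if_neg h, if_neg (fun hc => h (key.mp hc))]

lemma exp_pi_div_two_I : Complex.exp (((Real.pi/2 : ℝ):ℂ) * Complex.I) = Complex.I := by
  rw [Complex.exp_mul_I, ← Complex.ofReal_cos, ← Complex.ofReal_sin,
    Real.cos_pi_div_two, Real.sin_pi_div_two]
  norm_num

lemma om_sq : om * om = Complex.I := by
  rw [om, ← Complex.exp_add, show ((Real.pi/4:ℝ):ℂ) * Complex.I + ((Real.pi/4:ℝ):ℂ) * Complex.I
    = ((Real.pi/2:ℝ):ℂ) * Complex.I by push_cast; ring, exp_pi_div_two_I]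

lemma gsum_eight (S : ℤ) (hS : Odd S) :
    Gsum S 8 = (1 + Complex.I ^ S) * ((jacobiSym 2 S.natAbs : ℤ):ℂ)
      * (2 * ((Real.sqrt 2 : ℝ):ℂ)) := by
  have hω0 : om ≠ 0 := Complex.exp_ne_zero _
  have hI0 : Complex.I ≠ 0 := Complex.I_ne_zero
  have om8 : om ^ ((8:ℕ):ℤ) = 1 := by
    rw [zpow_natCast, om, ← Complex.exp_nat_mul,
      show ((8:ℕ):ℂ) * (((Real.pi/4:ℝ):ℂ) * Complex.I) = 2*Real.pi*Complex.I by push_cast; ring]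
    exact Complex.exp_two_pi_mul_I
  have I8 : Complex.I ^ ((8:ℕ):ℤ) = 1 := by
    rw [zpow_natCast, show (8:ℕ) = 4*2 from rfl, pow_mul, Complex.I_pow_four, one_pow]
  have hq : 8 * (S / 8) + S % 8 = S := Int.mul_ediv_add_emod S 8
  have homS : om ^ S = om ^ (S % 8) := by
    conv_lhs => rw [← hq]
    rw [zpow_add₀ hω0, show (8:ℤ) * (S/8) = ((8:ℕ):ℤ) * (S/8) by norm_num,
      zpow_mul, om8, one_zpow, one_mul]
  have hIS : Complex.I ^ S = Complex.I ^ (S % 8) := by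
    conv_lhs => rw [← hq]
    rw [zpow_add₀ hI0, show (8:ℤ) * (S/8) = ((8:ℕ):ℤ) * (S/8) by norm_num,
      zpow_mul, I8, one_zpow, one_mul]
  have o3 : om ^ ((3:ℕ):ℤ) = Complex.I * om := by
    rw [zpow_natCast, show om^(3:ℕ) = (om*om)*om by ring, om_sq]
  have o5 : om ^ ((5:ℕ):ℤ) = - om := by
    rw [zpow_natCast, show om^(5:ℕ) = (om*om)*(om*om)*om by ring, om_sq, Complex.I_mul_I]
    ring
  have o7 : om ^ ((7:ℕ):ℤ) = - (Complex.I * om) := by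
    rw [zpow_natCast, show om^(7:ℕ) = (om*om)*((om*om)*((om*om)*om)) by ring, om_sq,
      ← mul_assoc, Complex.I_mul_I]
    ring
  have i3 : Complex.I ^ ((3:ℕ):ℤ) = - Complex.I := by
    rw [zpow_natCast, show Complex.I^(3:ℕ) = (Complex.I*Complex.I)*Complex.I by ring,
      Complex.I_mul_I]
    ring
  have i5 : Complex.I ^ ((5:ℕ):ℤ) = Complex.I := by
    rw [zpow_natCast, show Complex.I^(5:ℕ)
      = (Complex.I*Complex.I)*((Complex.I*Complex.I)*Complex.I) by ring, Complex.I_mul_I]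
    ring
  have i7 : Complex.I ^ ((7:ℕ):ℤ) = - Complex.I := by
    rw [zpow_natCast, show Complex.I^(7:ℕ)
      = (Complex.I*Complex.I)*((Complex.I*Complex.I)*((Complex.I*Complex.I)*Complex.I)) by ring,
      Complex.I_mul_I]
    ring
  obtain ⟨k, hk⟩ := hS
  have hr : S % 8 = 1 ∨ S % 8 = 3 ∨ S % 8 = 5 ∨ S % 8 = 7 := by omega
  rw [gsum_eight_aux S ⟨k, hk⟩, homS, hIS, jacobi_two_val S ⟨k, hk⟩]
  rcases hr with h | h | h | h <;> rw [h]
  · rw [if_pos (Or.inl rfl), show (1:ℤ) = ((1:ℕ):ℤ) by norm_num, zpow_natCast, zpow_natCast,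
      pow_one, pow_one, om_val]
    push_cast
    ring
  · rw [if_neg (by omega), show (3:ℤ) = ((3:ℕ):ℤ) by norm_num, o3, i3, om_val]
    push_cast
    linear_combination (2*(Real.sqrt 2:ℂ)) * Complex.I_sq
  · rw [if_neg (by omega), show (5:ℤ) = ((5:ℕ):ℤ) by norm_num, o5, i5, om_val]
    push_cast
    ring
  · rw [if_pos (Or.inr rfl), show (7:ℤ) = ((7:ℕ):ℤ) by norm_num, o7, i7, om_val]
    push_cast
    linear_combination (-2*(Real.sqrt 2:ℂ)) * Complex.I_sq

lemma gsum_pows (S : ℤ) (hS : Odd S) (m : ℕ) :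
    Gsum S (2^(2*m+2)) = 2^m * Gsum S 4 ∧ Gsum S (2^(2*m+3)) = 2^m * Gsum S 8 := by
  induction m with
  | zero => norm_num
  | succ m ih =>
      constructor
      · rw [show 2*(m+1)+2 = 2*m+4 by ring, gsum_step S hS (2*m), ih.1]
        ring
      · rw [show 2*(m+1)+3 = (2*m+1)+4 by ring, gsum_step S hS (2*m+1),
          show (2*m+1)+2 = 2*m+3 by ring, ih.2]
        ring

theorem stmt_4' (S : ℤ) (hS : Odd S) :
    Gsum S 2 = 0 ∧
      ∀ n : ℕ, 1 < n →
        Gsum S (2 ^ n) =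
          (1 + Complex.I ^ S) * ((jacobiSym 2 S.natAbs : ℤ) : ℂ) ^ n *
            (Real.sqrt (2 ^ n) : ℂ) := by
  refine ⟨gsum_two' S hS, ?_⟩
  intro n hn
  have hjsq : ((jacobiSym 2 S.natAbs : ℤ) : ℂ)^2 = 1 := by
    have hg : Int.gcd 2 (S.natAbs) = 1 := by
      obtain ⟨k, hk⟩ := Int.natAbs_odd.mpr hS
      have h1 : S.natAbs % 2 = 1 := by omega
      have : Int.gcd 2 (S.natAbs) = Nat.gcd 2 S.natAbs := by
        simp [Int.gcd, Int.natAbs_abs]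
      rw [this, Nat.gcd_rec, h1]
      decide
    have h2 := jacobiSym.sq_one (a := 2) (b := S.natAbs) hg
    exact_mod_cast congrArg (fun x : ℤ => (x:ℂ)) h2
  obtain ⟨m, hm | hm⟩ : ∃ m, n = 2*m+2 ∨ n = 2*m+3 := ⟨(n-2)/2, by omega⟩
  · subst hm
    rw [(gsum_pows S hS m).1, gsum_four S hS]
    rw [show 2*m+2 = 2*(m+1) by ring, pow_mul, hjsq, one_pow]
    rw [show ((2:ℝ)^(2*(m+1))) = ((2:ℝ)^(m+1))^2 by ring, Real.sqrt_sq (by positivity)]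
    push_cast
    ring
  · subst hm
    rw [(gsum_pows S hS m).2, gsum_eight S hS]
    rw [show 2*m+3 = 2*(m+1)+1 by ring, pow_succ, pow_mul, hjsq, one_pow, one_mul]
    rw [show ((2:ℝ)^(2*(m+1)+1)) = ((2:ℝ)^(m+1))^2 * 2 by ring,
      Real.sqrt_mul (by positivity), Real.sqrt_sq (by positivity)]
    push_cast
    ring

theorem stmt_4 (S : ℤ) (hS : Odd S) :
    Gsum S 2 = 0 ∧
      ∀ n : ℕ, 1 < n →
        Gsum S (2 ^ n) =
          (1 + Complex.I ^ S) * ((jacobiSym 2 S.natAbs : ℤ) : ℂ) ^ n *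
            (Real.sqrt (2 ^ n) : ℂ) := by exact stmt_4' S hS
end

section
/- Let n be a positive integer, S odd, and nonnegative integers \alpha,\beta \le n. Then \sum over x in [0,2^n) with 2^\alpha | x of e^{2\pi i S 2^\beta x^2/2^n} equals 2^{n-\alpha} if 2\alpha+\beta \ge n, equals 0 if 2\alpha+\beta = n-1, and equals 2^\beta G(S;2^{n-\beta}) if 2\alpha+\beta \le n-2. -/
open Finset

noncomputable def Fe (N : ℕ) (t : ℤ) : ℂ :=
  Complex.exp (2 * Real.pi * Complex.I * (t : ℂ) / (2:ℂ)^N)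

lemma two_pow_ne (N : ℕ) : ((2:ℂ)^N) ≠ 0 := pow_ne_zero _ two_ne_zero

lemma Fe_congr (N : ℕ) {t t' : ℤ} (h : (2^N : ℤ) ∣ (t' - t)) : Fe N t' = Fe N t := by
  obtain ⟨s, hs⟩ := h
  have ht' : t' = t + 2^N * s := by linarith
  subst ht'
  unfold Fe
  have h2 := two_pow_ne N
  have : 2 * (Real.pi:ℂ) * Complex.I * ((t + 2^N * s : ℤ) : ℂ) / (2:ℂ)^N
      = 2 * (Real.pi:ℂ) * Complex.I * (t : ℂ) / (2:ℂ)^N + s * (2 * Real.pi * Complex.I) := by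
    push_cast
    field_simp
  rw [this, Complex.exp_add, Complex.exp_int_mul_two_pi_mul_I, mul_one]

lemma Fe_pow_mul (N k : ℕ) (t : ℤ) : Fe (N + k) (2^k * t) = Fe N t := by
  unfold Fe
  congr 1
  have h2 := two_pow_ne N
  have h2k := two_pow_ne k
  rw [pow_add]
  push_cast
  field_simp

lemma shift_periodic (g : ℕ → ℂ) (k : ℕ) (hg : ∀ y, g (y + k) = g y) (c y : ℕ) :
    g (c * k + y) = g y := by
  induction c with
  | zero => simp
  | succ c ih =>
    have : (c+1) * k + y = (c * k + y) + k := by ring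
    rw [this, hg, ih]

lemma periodic_sum (g : ℕ → ℂ) (k : ℕ) (hg : ∀ y, g (y + k) = g y) (c : ℕ) :
    ∑ y ∈ range (c * k), g y = c * ∑ y ∈ range k, g y := by
  induction c with
  | zero => simp
  | succ c ih =>
    rw [show (c+1) * k = c * k + k by ring, Finset.sum_range_add, ih]
    push_cast
    rw [Finset.sum_congr rfl (fun y _ => shift_periodic g k hg c y)]
    ring

lemma even_odd_split (f : ℕ → ℂ) (k : ℕ) :
    ∑ x ∈ range (2 * k), f x = ∑ y ∈ range k, f (2 * y) + ∑ y ∈ range k, f (2 * y + 1) := by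
  induction k with
  | zero => simp
  | succ k ih =>
    rw [show 2 * (k+1) = 2*k + 2 by ring, Finset.sum_range_add]
    rw [ih, Finset.sum_range_succ, Finset.sum_range_succ]
    simp [Finset.sum_range_succ]
    ring

lemma exp_odd (u : ℤ) (hu : Odd u) : Complex.exp ((u:ℂ) * (Real.pi * Complex.I)) = -1 := by
  rw [Complex.exp_int_mul, Complex.exp_pi_mul_I, Odd.neg_one_zpow hu]

lemma Gsum_pow (S : ℤ) (k : ℕ) : Gsum S (2^k) = ∑ x ∈ range (2^k), Fe k (S * (x:ℤ)^2) := by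
  unfold Gsum Fe
  apply Finset.sum_congr rfl
  intro x _
  push_cast
  ring_nf

lemma Fe_add (N : ℕ) (t d : ℤ) : Fe N (t + d) = Fe N t * Fe N d := by
  unfold Fe
  rw [← Complex.exp_add]
  congr 1
  push_cast
  ring

lemma Fe_zero (N : ℕ) : Fe N 0 = 1 := by
  simp [Fe]

lemma Fe_one_odd (u : ℤ) (hu : Odd u) : Fe 1 u = -1 := by
  unfold Fe
  rw [show 2 * (Real.pi:ℂ) * Complex.I * (u:ℂ) / (2:ℂ)^1 = (u:ℂ) * (Real.pi * Complex.I) by ring]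
  exact exp_odd u hu

noncomputable def Hs (S : ℤ) (k : ℕ) : ℂ := ∑ x ∈ range (2^k), Fe k (S * (x:ℤ)^2)

lemma Hs_rec (S : ℤ) (hS : Odd S) (m' : ℕ) : Hs S (m'+4) = 2 * Hs S (m'+2) := by
  set m := m' + 2 with hm
  unfold Hs
  have h1 : ∑ x ∈ range (2^(m+2)), Fe (m+2) (S * (x:ℤ)^2)
      = 2 * ∑ x ∈ range (2^(m+1)), Fe (m+2) (S * (x:ℤ)^2) := by
    have hper : ∀ y : ℕ, Fe (m+2) (S * ((y + 2^(m+1) : ℕ):ℤ)^2) = Fe (m+2) (S * (y:ℤ)^2) := by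
      intro y
      apply Fe_congr
      refine ⟨S * ((y:ℤ) + 2^m), ?_⟩
      push_cast
      ring
    have := periodic_sum (fun x => Fe (m+2) (S * (x:ℤ)^2)) (2^(m+1)) hper 2
    rw [show (2:ℕ) * 2^(m+1) = 2^(m+2) by ring] at this
    simpa using this
  have h2 := even_odd_split (fun x => Fe (m+2) (S * (x:ℤ)^2)) (2^m)
  rw [show 2 * 2^m = 2^(m+1) by ring] at h2
  have h3 : ∀ y : ℕ, Fe (m+2) (S * ((2*y:ℕ):ℤ)^2) = Fe m (S * (y:ℤ)^2) := by
    intro y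
    rw [show S * ((2*y:ℕ):ℤ)^2 = 2^2 * (S * (y:ℤ)^2) by push_cast; ring]
    exact Fe_pow_mul m 2 _
  have hodd : ∑ y ∈ range (2^m), Fe (m+2) (S * ((2*y+1:ℕ):ℤ)^2) = 0 := by
    have hpair : ∀ y : ℕ,
        Fe (m+2) (S * ((2*(2^(m'+1) + y)+1:ℕ):ℤ)^2) = - Fe (m+2) (S * ((2*y+1:ℕ):ℤ)^2) := by
      intro y
      have harg : S * ((2*(2^(m'+1) + y)+1:ℕ):ℤ)^2
          = S * ((2*y+1:ℕ):ℤ)^2 + (2^(m+1) * (S * (2*(y:ℤ)+1)) + 2^(2*m) * S) := by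
        push_cast
        rw [hm]
        push_cast
        ring
      rw [harg, Fe_add, Fe_add]
      have e1 : Fe (m+2) (2^(m+1) * (S * (2*(y:ℤ)+1))) = -1 := by
        rw [show m + 2 = 1 + (m+1) by ring]
        rw [Fe_pow_mul 1 (m+1) (S * (2*(y:ℤ)+1))]
        exact Fe_one_odd _ (hS.mul ⟨(y:ℤ), by ring⟩)
      have e2 : Fe (m+2) (2^(2*m) * S) = 1 := by
        rw [show (2:ℤ)^(2*m) * S = 0 + 2^(m+2) * (2^(m') * S) by
          rw [hm]; ring]
        rw [Fe_congr (m+2) (⟨2^(m') * S, by ring⟩ :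
          (2:ℤ)^(m+2) ∣ ((0:ℤ) + 2^(m+2) * (2^(m') * S) - 0)), Fe_zero]
      rw [e1, e2]
      ring
    rw [show (2:ℕ)^m = 2^(m'+1) + 2^(m'+1) by rw [hm]; ring, Finset.sum_range_add]
    rw [Finset.sum_congr rfl (fun y _ => hpair y)]
    simp
  rw [show m' + 4 = m + 2 by omega]
  rw [h1, h2, hodd, Finset.sum_congr rfl (fun y _ => h3 y)]
  ring

lemma Hs_steps (S : ℤ) (hS : Odd S) (m' : ℕ) (a : ℕ) :
    Hs S (m' + 2 + 2*a) = 2^a * Hs S (m'+2) := by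
  induction a with
  | zero => simp
  | succ a ih =>
    have := Hs_rec S hS (m' + 2*a)
    rw [show m' + 2 + 2*(a+1) = m' + 2*a + 4 by ring, this,
      show m' + 2*a + 2 = m' + 2 + 2*a by ring, ih]
    ring

lemma filter_sum (f : ℕ → ℂ) (n α : ℕ) (hα : α ≤ n) :
    ∑ x ∈ (Finset.range (2^n)).filter (fun x => 2^α ∣ x), f x
      = ∑ y ∈ range (2^(n-α)), f (2^α * y) := by
  have hset : (Finset.range (2^n)).filter (fun x => 2^α ∣ x)
      = (range (2^(n-α))).image (fun y => 2^α * y) := by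
    ext x
    simp only [mem_filter, mem_range, mem_image]
    constructor
    · rintro ⟨hx, c, rfl⟩
      refine ⟨c, ?_, rfl⟩
      have hn : (2:ℕ)^n = 2^α * 2^(n-α) := by
        rw [← pow_add]; congr 1; omega
      rw [hn] at hx
      exact Nat.lt_of_mul_lt_mul_left hx
    · rintro ⟨y, hy, rfl⟩
      refine ⟨?_, Dvd.intro _ rfl⟩
      have hn : (2:ℕ)^n = 2^α * 2^(n-α) := by
        rw [← pow_add]; congr 1; omega
      rw [hn]
      exact Nat.mul_lt_mul_left (Nat.pow_pos (by norm_num)) |>.mpr hy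
  rw [hset, Finset.sum_image]
  intro a _ b _ h
  exact Nat.eq_of_mul_eq_mul_left (Nat.pow_pos (by norm_num)) h


theorem stmt_7 (n : ℕ) (hn : 0 < n) (S : ℤ) (hS : Odd S)
    (α β : ℕ) (hα : α ≤ n) (hβ : β ≤ n) :
    (2 * α + β ≥ n →
      ∑ x ∈ (Finset.range (2 ^ n)).filter (fun x => 2 ^ α ∣ x),
          Complex.exp (2 * Real.pi * Complex.I *
            ((S * 2 ^ β * (x : ℤ) ^ 2 : ℤ) : ℂ) / ((2 : ℂ) ^ n)) =
        (2 : ℂ) ^ (n - α)) ∧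
    (2 * α + β + 1 = n →
      ∑ x ∈ (Finset.range (2 ^ n)).filter (fun x => 2 ^ α ∣ x),
          Complex.exp (2 * Real.pi * Complex.I *
            ((S * 2 ^ β * (x : ℤ) ^ 2 : ℤ) : ℂ) / ((2 : ℂ) ^ n)) = 0) ∧
    (2 * α + β + 2 ≤ n →
      ∑ x ∈ (Finset.range (2 ^ n)).filter (fun x => 2 ^ α ∣ x),
          Complex.exp (2 * Real.pi * Complex.I *
            ((S * 2 ^ β * (x : ℤ) ^ 2 : ℤ) : ℂ) / ((2 : ℂ) ^ n)) =
        (2 : ℂ) ^ β * Gsum S (2 ^ (n - β))) := by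
  have hre : ∑ x ∈ (Finset.range (2 ^ n)).filter (fun x => 2 ^ α ∣ x),
      Complex.exp (2 * Real.pi * Complex.I *
        ((S * 2 ^ β * (x : ℤ) ^ 2 : ℤ) : ℂ) / ((2 : ℂ) ^ n))
      = ∑ y ∈ range (2^(n-α)), Fe n (S * 2^β * ((2^α * y : ℕ):ℤ)^2) :=
    filter_sum (fun x => Fe n (S * 2^β * (x:ℤ)^2)) n α hα
  refine ⟨?_, ?_, ?_⟩
  · -- Case 1 : 2α+β ≥ n
    intro h
    rw [hre]
    have hterm : ∀ y ∈ range (2^(n-α)), Fe n (S * 2^β * ((2^α * y : ℕ):ℤ)^2) = 1 := by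
      intro y _
      have hpow : (2:ℤ)^β * ((2:ℤ)^α)^2 = 2^n * 2^(2*α+β-n) := by
        rw [← pow_mul, ← pow_add, ← pow_add]
        congr 1
        omega
      have : Fe n (S * 2^β * ((2^α * y : ℕ):ℤ)^2) = Fe n 0 := by
        apply Fe_congr
        refine ⟨S * (y:ℤ)^2 * 2^(2*α+β-n), ?_⟩
        push_cast
        linear_combination (S * (y:ℤ)^2) * hpow
      rw [this, Fe_zero]
    rw [Finset.sum_congr rfl hterm, Finset.sum_const, Finset.card_range]
    push_cast
    ring
  · -- Case 2 : 2α+β+1 = n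
    intro h
    rw [hre]
    have hterm : ∀ y : ℕ, Fe n (S * 2^β * ((2^α * y : ℕ):ℤ)^2) = (-1:ℂ)^y := by
      intro y
      have h1 : Fe n (S * 2^β * ((2^α * y : ℕ):ℤ)^2) = Fe 1 (S * (y:ℤ)^2) := by
        have hpow : (2:ℤ)^β * ((2:ℤ)^α)^2 = 2^(n-1) := by
          rw [← pow_mul, ← pow_add]; congr 1; omega
        have harg : S * 2^β * ((2^α * y : ℕ):ℤ)^2 = 2^(n-1) * (S * (y:ℤ)^2) := by
          push_cast
          linear_combination (S * (y:ℤ)^2) * hpow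
        have hfp := Fe_pow_mul 1 (n-1) (S * (y:ℤ)^2)
        rw [show 1 + (n-1) = n by omega] at hfp
        rw [harg]
        exact hfp
      rw [h1]
      rcases Nat.even_or_odd y with hy | hy
      · obtain ⟨c, rfl⟩ := hy
        rw [show S * ((c + c : ℕ):ℤ)^2 = 0 + 2^1 * (S * 2 * c^2) by push_cast; ring]
        rw [Fe_congr 1 (⟨S * 2 * (c:ℤ)^2, by ring⟩ :
          (2:ℤ)^1 ∣ ((0:ℤ) + 2^1 * (S * 2 * (c:ℤ)^2) - 0)), Fe_zero]
        rw [Even.neg_one_pow ⟨c, rfl⟩]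
      · rw [Fe_one_odd _ (hS.mul (hy.natCast.pow)), Odd.neg_one_pow hy]
    rw [Finset.sum_congr rfl (fun y _ => hterm y)]
    rw [neg_one_geom_sum]
    have : Even (2^(n-α)) := (Nat.even_pow).mpr ⟨even_iff_two_dvd.mpr ⟨1, rfl⟩, by omega⟩
    simp [this]
  · -- Case 3 : 2α+β+2 ≤ n
    intro h
    obtain ⟨m', hm'⟩ : ∃ m', n = 2*α + β + (m'+2) := ⟨n - 2*α - β - 2, by omega⟩
    rw [hre]
    have hterm : ∀ y : ℕ, Fe n (S * 2^β * ((2^α * y : ℕ):ℤ)^2) = Fe (m'+2) (S * (y:ℤ)^2) := by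
      intro y
      have hpow : (2:ℤ)^β * ((2:ℤ)^α)^2 = 2^(2*α+β) := by
        rw [← pow_mul, ← pow_add]; congr 1; omega
      have harg : S * 2^β * ((2^α * y : ℕ):ℤ)^2 = 2^(2*α+β) * (S * (y:ℤ)^2) := by
        push_cast
        linear_combination (S * (y:ℤ)^2) * hpow
      have hfp := Fe_pow_mul (m'+2) (2*α+β) (S * (y:ℤ)^2)
      rw [show (m'+2) + (2*α+β) = n by omega] at hfp
      rw [harg]
      exact hfp
    rw [Finset.sum_congr rfl (fun y _ => hterm y)]
    have hper : ∀ y : ℕ, Fe (m'+2) (S * ((y + 2^(m'+2) : ℕ):ℤ)^2) = Fe (m'+2) (S * (y:ℤ)^2) := by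
      intro y
      apply Fe_congr
      exact ⟨S * (2*(y:ℤ) + 2^(m'+2)), by push_cast; ring⟩
    have hsplit := periodic_sum (fun y => Fe (m'+2) (S * (y:ℤ)^2)) (2^(m'+2)) hper (2^(α+β))
    rw [show 2^(α+β) * 2^(m'+2) = 2^(n-α) by rw [← pow_add]; congr 1; omega] at hsplit
    rw [hsplit]
    have hG : Gsum S (2^(n-β)) = Hs S ((m'+2) + 2*α) := by
      rw [show n - β = (m'+2) + 2*α by omega]
      exact Gsum_pow S _
    rw [hG, show (m'+2) + 2*α = m' + 2 + 2*α by ring, Hs_steps S hS m' α]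
    unfold Hs
    push_cast
    ring
end
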